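/- The dodecahedron graph (20 vertices, 30 edges, 3-regular) has a proper edge coloring with 6 colors in which each color class is a 5-edge matching invariant under a 5-fold rotation, and the rotation group A5 permutes the 6 color classes transitively. -/

import Mathlib

/-- The dodecahedron graph, presented as the generalized Petersen graph GP(10,2)
(20 vertices, 30 edges, 3-regular). -/
def dodecahedronGraph : SimpleGraph (Fin 10 ⊕ Fin 10) :=
  SimpleGraph.fromRel (fun a b =>
    match a, b with
    | .inl i, .inl j => j = i + 1
    | .inl i, .inr j => j = i
    | .inr i, .inr j => j = i + 2
    | _, _ => False)

namespace Stmt18Aux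

abbrev V := Fin 10 ⊕ Fin 10

def R : V → V → Prop
  | .inl i, .inl j => j = i + 1
  | .inl i, .inr j => j = i
  | .inr i, .inr j => j = i + 2
  | _, _ => False

instance : ∀ a b : V, Decidable (R a b)
  | .inl i, .inl j => inferInstanceAs (Decidable (j = i + 1))
  | .inl i, .inr j => inferInstanceAs (Decidable (j = i))
  | .inr _, .inl _ => inferInstanceAs (Decidable False)
  | .inr i, .inr j => inferInstanceAs (Decidable (j = i + 2))

lemma adj_iff (a b : V) : dodecahedronGraph.Adj a b ↔ a ≠ b ∧ (R a b ∨ R b a) := by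
  cases a <;> cases b <;> exact Iff.rfl

instance instDec : DecidableRel dodecahedronGraph.Adj := fun a b =>
  decidable_of_iff _ (adj_iff a b).symm

def encPair : V → Fin 5 × Fin 5 := Sum.elim ![(0,1), (2,3), (1,4), (0,2), (4,3), (1,0), (3,2), (4,1), (2,0), (3,4)] ![(4,2), (4,0), (3,0), (3,1), (2,1), (2,4), (0,4), (0,3), (1,3), (1,2)]

def decV : Fin 5 → Fin 5 → V :=
  ![![(Sum.inl 0), (Sum.inl 0), (Sum.inl 3), (Sum.inr 7), (Sum.inr 6)],
   ![(Sum.inl 5), (Sum.inl 0), (Sum.inr 9), (Sum.inr 8), (Sum.inl 2)],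
   ![(Sum.inl 8), (Sum.inr 4), (Sum.inl 0), (Sum.inl 1), (Sum.inr 5)],
   ![(Sum.inr 2), (Sum.inr 3), (Sum.inl 6), (Sum.inl 0), (Sum.inl 9)],
   ![(Sum.inr 1), (Sum.inl 7), (Sum.inr 0), (Sum.inl 4), (Sum.inl 0)]]

lemma encPair_ne : ∀ v : V, (encPair v).1 ≠ (encPair v).2 := by decide

def E : {p : Fin 5 × Fin 5 // p.1 ≠ p.2} ≃ V where
  toFun p := decV p.1.1 p.1.2
  invFun v := ⟨encPair v, encPair_ne v⟩
  left_inv := by intro p; revert p; decide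
  right_inv := by intro v; revert v; decide

def φ0 (g : Equiv.Perm (Fin 5)) : Equiv.Perm V :=
  E.permCongr (Equiv.Perm.subtypePerm (Equiv.prodCongr g g)
    (fun x => (g.injective.ne_iff (x := x.1) (y := x.2))))

lemma φ0_mul (a b : Equiv.Perm (Fin 5)) : φ0 (a * b) = φ0 a * φ0 b := by
  ext v
  simp only [φ0, Equiv.permCongr_apply, Equiv.Perm.mul_apply, Equiv.symm_apply_apply]
  rfl

def φ : Equiv.Perm (Fin 5) →* Equiv.Perm V := MonoidHom.mk' φ0 φ0_mul

lemma hne5 : ∀ i : Fin 5, i ≠ i + 1 := by decide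

lemma φ_inj : Function.Injective φ := by
  intro a b hab
  have h1 : (Equiv.Perm.subtypePerm (Equiv.prodCongr a a)
      (fun x => (a.injective.ne_iff (x := x.1) (y := x.2)))) =
      (Equiv.Perm.subtypePerm (Equiv.prodCongr b b)
      (fun x => (b.injective.ne_iff (x := x.1) (y := x.2)))) :=
    E.permCongr.injective hab
  refine Equiv.ext fun i => ?_
  exact congrArg (fun q : Equiv.Perm {p : Fin 5 × Fin 5 // p.1 ≠ p.2} =>
    ((q ⟨(i, i + 1), hne5 i⟩).val).1) h1

def φA : alternatingGroup (Fin 5) →* Equiv.Perm V :=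
  φ.comp (alternatingGroup (Fin 5)).subtype

lemma φA_inj : Function.Injective φA :=
  φ_inj.comp (Subgroup.subtype_injective _)

def Hgrp : Subgroup (Equiv.Perm V) := φA.range

def F : Fin 6 → Finset (Sym2 V) :=
  ![{s((Sum.inl 3), (Sum.inr 3)), s((Sum.inr 7), (Sum.inr 5)), s((Sum.inr 8), (Sum.inr 0)), s((Sum.inl 2), (Sum.inr 2)), s((Sum.inl 8), (Sum.inl 7))},
    {s((Sum.inl 0), (Sum.inl 9)), s((Sum.inr 7), (Sum.inr 9)), s((Sum.inl 5), (Sum.inr 5)), s((Sum.inr 4), (Sum.inl 4)), s((Sum.inr 2), (Sum.inr 0))},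
    {s((Sum.inr 7), (Sum.inl 7)), s((Sum.inr 6), (Sum.inl 6)), s((Sum.inr 9), (Sum.inr 1)), s((Sum.inl 2), (Sum.inl 1)), s((Sum.inr 4), (Sum.inr 2))},
    {s((Sum.inl 0), (Sum.inr 0)), s((Sum.inr 6), (Sum.inr 8)), s((Sum.inl 5), (Sum.inl 6)), s((Sum.inl 1), (Sum.inr 1)), s((Sum.inr 5), (Sum.inr 3))},
    {s((Sum.inl 0), (Sum.inl 1)), s((Sum.inl 3), (Sum.inl 2)), s((Sum.inl 5), (Sum.inl 4)), s((Sum.inl 8), (Sum.inl 9)), s((Sum.inl 6), (Sum.inl 7))},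
    {s((Sum.inl 3), (Sum.inl 4)), s((Sum.inr 6), (Sum.inr 4)), s((Sum.inr 9), (Sum.inl 9)), s((Sum.inr 8), (Sum.inl 8)), s((Sum.inr 3), (Sum.inr 1))}]

def cdef : Fin 6 → Equiv.Perm (Fin 5) :=
  ![⟨![1,2,3,4,0], ![4,0,1,2,3], by decide, by decide⟩,
    ⟨![1,2,4,0,3], ![3,0,1,4,2], by decide, by decide⟩,
    ⟨![1,3,0,4,2], ![2,0,4,1,3], by decide, by decide⟩,
    ⟨![1,3,4,2,0], ![4,0,3,1,2], by decide, by decide⟩,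
    ⟨![1,4,0,2,3], ![2,0,3,4,1], by decide, by decide⟩,
    ⟨![1,4,3,0,2], ![3,0,4,2,1], by decide, by decide⟩]

def sdef : Fin 6 → Fin 6 → Equiv.Perm (Fin 5) :=
  ![![⟨![0,1,2,3,4], ![0,1,2,3,4], by decide, by decide⟩,
      ⟨![0,2,3,1,4], ![0,3,1,2,4], by decide, by decide⟩,
      ⟨![0,1,3,4,2], ![0,1,4,2,3], by decide, by decide⟩,
      ⟨![0,2,1,4,3], ![0,2,1,4,3], by decide, by decide⟩,
      ⟨![0,3,1,2,4], ![0,2,3,1,4], by decide, by decide⟩,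
      ⟨![0,1,4,2,3], ![0,1,3,4,2], by decide, by decide⟩],
    ![⟨![0,2,4,3,1], ![0,4,1,3,2], by decide, by decide⟩,
      ⟨![0,1,2,3,4], ![0,1,2,3,4], by decide, by decide⟩,
      ⟨![0,3,2,4,1], ![0,4,2,1,3], by decide, by decide⟩,
      ⟨![0,1,3,4,2], ![0,1,4,2,3], by decide, by decide⟩,
      ⟨![0,1,4,2,3], ![0,1,3,4,2], by decide, by decide⟩,
      ⟨![0,2,1,4,3], ![0,2,1,4,3], by decide, by decide⟩],
    ![⟨![0,1,4,2,3], ![0,1,3,4,2], by decide, by decide⟩,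
      ⟨![0,2,4,3,1], ![0,4,1,3,2], by decide, by decide⟩,
      ⟨![0,1,2,3,4], ![0,1,2,3,4], by decide, by decide⟩,
      ⟨![0,2,3,1,4], ![0,3,1,2,4], by decide, by decide⟩,
      ⟨![0,3,4,1,2], ![0,3,4,1,2], by decide, by decide⟩,
      ⟨![0,1,3,4,2], ![0,1,4,2,3], by decide, by decide⟩],
    ![⟨![0,2,1,4,3], ![0,2,1,4,3], by decide, by decide⟩,
      ⟨![0,1,4,2,3], ![0,1,3,4,2], by decide, by decide⟩,
      ⟨![0,3,1,2,4], ![0,2,3,1,4], by decide, by decide⟩,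
      ⟨![0,1,2,3,4], ![0,1,2,3,4], by decide, by decide⟩,
      ⟨![0,1,3,4,2], ![0,1,4,2,3], by decide, by decide⟩,
      ⟨![0,2,3,1,4], ![0,3,1,2,4], by decide, by decide⟩],
    ![⟨![0,2,3,1,4], ![0,3,1,2,4], by decide, by decide⟩,
      ⟨![0,1,3,4,2], ![0,1,4,2,3], by decide, by decide⟩,
      ⟨![0,3,4,1,2], ![0,3,4,1,2], by decide, by decide⟩,
      ⟨![0,1,4,2,3], ![0,1,3,4,2], by decide, by decide⟩,
      ⟨![0,1,2,3,4], ![0,1,2,3,4], by decide, by decide⟩,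
      ⟨![0,2,4,3,1], ![0,4,1,3,2], by decide, by decide⟩],
    ![⟨![0,1,3,4,2], ![0,1,4,2,3], by decide, by decide⟩,
      ⟨![0,2,1,4,3], ![0,2,1,4,3], by decide, by decide⟩,
      ⟨![0,1,4,2,3], ![0,1,3,4,2], by decide, by decide⟩,
      ⟨![0,2,4,3,1], ![0,4,1,3,2], by decide, by decide⟩,
      ⟨![0,3,2,4,1], ![0,4,2,1,3], by decide, by decide⟩,
      ⟨![0,1,2,3,4], ![0,1,2,3,4], by decide, by decide⟩]]


def ldef : ℕ → Equiv.Perm (Fin 5)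
  | 0 => ⟨![0,1,2,3,4], ![0,1,2,3,4], by decide, by decide⟩
  | 1 => ⟨![0,1,3,4,2], ![0,1,4,2,3], by decide, by decide⟩
  | 2 => ⟨![0,1,4,2,3], ![0,1,3,4,2], by decide, by decide⟩
  | 3 => ⟨![0,2,1,4,3], ![0,2,1,4,3], by decide, by decide⟩
  | 4 => ⟨![0,2,3,1,4], ![0,3,1,2,4], by decide, by decide⟩
  | 5 => ⟨![0,2,4,3,1], ![0,4,1,3,2], by decide, by decide⟩
  | 6 => ⟨![0,3,1,2,4], ![0,2,3,1,4], by decide, by decide⟩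
  | 7 => ⟨![0,3,2,4,1], ![0,4,2,1,3], by decide, by decide⟩
  | 8 => ⟨![0,3,4,1,2], ![0,3,4,1,2], by decide, by decide⟩
  | 9 => ⟨![0,4,1,3,2], ![0,2,4,3,1], by decide, by decide⟩
  | 10 => ⟨![0,4,2,1,3], ![0,3,2,4,1], by decide, by decide⟩
  | 11 => ⟨![0,4,3,2,1], ![0,4,3,2,1], by decide, by decide⟩
  | 12 => ⟨![1,0,2,4,3], ![1,0,2,4,3], by decide, by decide⟩
  | 13 => ⟨![1,0,3,2,4], ![1,0,3,2,4], by decide, by decide⟩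
  | 14 => ⟨![1,0,4,3,2], ![1,0,4,3,2], by decide, by decide⟩
  | 15 => ⟨![1,2,0,3,4], ![2,0,1,3,4], by decide, by decide⟩
  | 16 => ⟨![1,2,3,4,0], ![4,0,1,2,3], by decide, by decide⟩
  | 17 => ⟨![1,2,4,0,3], ![3,0,1,4,2], by decide, by decide⟩
  | 18 => ⟨![1,3,0,4,2], ![2,0,4,1,3], by decide, by decide⟩
  | 19 => ⟨![1,3,2,0,4], ![3,0,2,1,4], by decide, by decide⟩
  | 20 => ⟨![1,3,4,2,0], ![4,0,3,1,2], by decide, by decide⟩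
  | 21 => ⟨![1,4,0,2,3], ![2,0,3,4,1], by decide, by decide⟩
  | 22 => ⟨![1,4,2,3,0], ![4,0,2,3,1], by decide, by decide⟩
  | 23 => ⟨![1,4,3,0,2], ![3,0,4,2,1], by decide, by decide⟩
  | 24 => ⟨![2,0,1,3,4], ![1,2,0,3,4], by decide, by decide⟩
  | 25 => ⟨![2,0,3,4,1], ![1,4,0,2,3], by decide, by decide⟩
  | 26 => ⟨![2,0,4,1,3], ![1,3,0,4,2], by decide, by decide⟩
  | 27 => ⟨![2,1,0,4,3], ![2,1,0,4,3], by decide, by decide⟩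
  | 28 => ⟨![2,1,3,0,4], ![3,1,0,2,4], by decide, by decide⟩
  | 29 => ⟨![2,1,4,3,0], ![4,1,0,3,2], by decide, by decide⟩
  | 30 => ⟨![2,3,0,1,4], ![2,3,0,1,4], by decide, by decide⟩
  | 31 => ⟨![2,3,1,4,0], ![4,2,0,1,3], by decide, by decide⟩
  | 32 => ⟨![2,3,4,0,1], ![3,4,0,1,2], by decide, by decide⟩
  | 33 => ⟨![2,4,0,3,1], ![2,4,0,3,1], by decide, by decide⟩
  | 34 => ⟨![2,4,1,0,3], ![3,2,0,4,1], by decide, by decide⟩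
  | 35 => ⟨![2,4,3,1,0], ![4,3,0,2,1], by decide, by decide⟩
  | 36 => ⟨![3,0,1,4,2], ![1,2,4,0,3], by decide, by decide⟩
  | 37 => ⟨![3,0,2,1,4], ![1,3,2,0,4], by decide, by decide⟩
  | 38 => ⟨![3,0,4,2,1], ![1,4,3,0,2], by decide, by decide⟩
  | 39 => ⟨![3,1,0,2,4], ![2,1,3,0,4], by decide, by decide⟩
  | 40 => ⟨![3,1,2,4,0], ![4,1,2,0,3], by decide, by decide⟩
  | 41 => ⟨![3,1,4,0,2], ![3,1,4,0,2], by decide, by decide⟩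
  | 42 => ⟨![3,2,0,4,1], ![2,4,1,0,3], by decide, by decide⟩
  | 43 => ⟨![3,2,1,0,4], ![3,2,1,0,4], by decide, by decide⟩
  | 44 => ⟨![3,2,4,1,0], ![4,3,1,0,2], by decide, by decide⟩
  | 45 => ⟨![3,4,0,1,2], ![2,3,4,0,1], by decide, by decide⟩
  | 46 => ⟨![3,4,1,2,0], ![4,2,3,0,1], by decide, by decide⟩
  | 47 => ⟨![3,4,2,0,1], ![3,4,2,0,1], by decide, by decide⟩
  | 48 => ⟨![4,0,1,2,3], ![1,2,3,4,0], by decide, by decide⟩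
  | 49 => ⟨![4,0,2,3,1], ![1,4,2,3,0], by decide, by decide⟩
  | 50 => ⟨![4,0,3,1,2], ![1,3,4,2,0], by decide, by decide⟩
  | 51 => ⟨![4,1,0,3,2], ![2,1,4,3,0], by decide, by decide⟩
  | 52 => ⟨![4,1,2,0,3], ![3,1,2,4,0], by decide, by decide⟩
  | 53 => ⟨![4,1,3,2,0], ![4,1,3,2,0], by decide, by decide⟩
  | 54 => ⟨![4,2,0,1,3], ![2,3,1,4,0], by decide, by decide⟩
  | 55 => ⟨![4,2,1,3,0], ![4,2,1,3,0], by decide, by decide⟩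
  | 56 => ⟨![4,2,3,0,1], ![3,4,1,2,0], by decide, by decide⟩
  | 57 => ⟨![4,3,0,2,1], ![2,4,3,1,0], by decide, by decide⟩
  | 58 => ⟨![4,3,1,0,2], ![3,2,4,1,0], by decide, by decide⟩
  | 59 => ⟨![4,3,2,1,0], ![4,3,2,1,0], by decide, by decide⟩
  | _ => 1

abbrev Pred (g : Equiv.Perm V) : Prop :=
  (∀ a b : V, dodecahedronGraph.Adj (g a) (g b) ↔ dodecahedronGraph.Adj a b) ∧
  (∀ i : Fin 6, ∃ j : Fin 6, (F i).image (Sym2.map g) = F j)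

set_option maxRecDepth 1000000
set_option maxHeartbeats 1000000

lemma complete : ∀ σ : Equiv.Perm (Fin 5), Equiv.Perm.sign σ = 1 →
    ∃ n : Fin 60, σ = ldef n.val := by decide

lemma k0 : Pred (φ0 (ldef 0)) := by decide
lemma k1 : Pred (φ0 (ldef 1)) := by decide
lemma k2 : Pred (φ0 (ldef 2)) := by decide
lemma k3 : Pred (φ0 (ldef 3)) := by decide
lemma k4 : Pred (φ0 (ldef 4)) := by decide
lemma k5 : Pred (φ0 (ldef 5)) := by decide
lemma k6 : Pred (φ0 (ldef 6)) := by decide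
lemma k7 : Pred (φ0 (ldef 7)) := by decide
lemma k8 : Pred (φ0 (ldef 8)) := by decide
lemma k9 : Pred (φ0 (ldef 9)) := by decide
lemma k10 : Pred (φ0 (ldef 10)) := by decide
lemma k11 : Pred (φ0 (ldef 11)) := by decide
lemma k12 : Pred (φ0 (ldef 12)) := by decide
lemma k13 : Pred (φ0 (ldef 13)) := by decide
lemma k14 : Pred (φ0 (ldef 14)) := by decide
lemma k15 : Pred (φ0 (ldef 15)) := by decide
lemma k16 : Pred (φ0 (ldef 16)) := by decide
lemma k17 : Pred (φ0 (ldef 17)) := by decide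
lemma k18 : Pred (φ0 (ldef 18)) := by decide
lemma k19 : Pred (φ0 (ldef 19)) := by decide
lemma k20 : Pred (φ0 (ldef 20)) := by decide
lemma k21 : Pred (φ0 (ldef 21)) := by decide
lemma k22 : Pred (φ0 (ldef 22)) := by decide
lemma k23 : Pred (φ0 (ldef 23)) := by decide
lemma k24 : Pred (φ0 (ldef 24)) := by decide
lemma k25 : Pred (φ0 (ldef 25)) := by decide
lemma k26 : Pred (φ0 (ldef 26)) := by decide
lemma k27 : Pred (φ0 (ldef 27)) := by decide
lemma k28 : Pred (φ0 (ldef 28)) := by decide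
lemma k29 : Pred (φ0 (ldef 29)) := by decide
lemma k30 : Pred (φ0 (ldef 30)) := by decide
lemma k31 : Pred (φ0 (ldef 31)) := by decide
lemma k32 : Pred (φ0 (ldef 32)) := by decide
lemma k33 : Pred (φ0 (ldef 33)) := by decide
lemma k34 : Pred (φ0 (ldef 34)) := by decide
lemma k35 : Pred (φ0 (ldef 35)) := by decide
lemma k36 : Pred (φ0 (ldef 36)) := by decide
lemma k37 : Pred (φ0 (ldef 37)) := by decide
lemma k38 : Pred (φ0 (ldef 38)) := by decide
lemma k39 : Pred (φ0 (ldef 39)) := by decide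
lemma k40 : Pred (φ0 (ldef 40)) := by decide
lemma k41 : Pred (φ0 (ldef 41)) := by decide
lemma k42 : Pred (φ0 (ldef 42)) := by decide
lemma k43 : Pred (φ0 (ldef 43)) := by decide
lemma k44 : Pred (φ0 (ldef 44)) := by decide
lemma k45 : Pred (φ0 (ldef 45)) := by decide
lemma k46 : Pred (φ0 (ldef 46)) := by decide
lemma k47 : Pred (φ0 (ldef 47)) := by decide
lemma k48 : Pred (φ0 (ldef 48)) := by decide
lemma k49 : Pred (φ0 (ldef 49)) := by decide
lemma k50 : Pred (φ0 (ldef 50)) := by decide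
lemma k51 : Pred (φ0 (ldef 51)) := by decide
lemma k52 : Pred (φ0 (ldef 52)) := by decide
lemma k53 : Pred (φ0 (ldef 53)) := by decide
lemma k54 : Pred (φ0 (ldef 54)) := by decide
lemma k55 : Pred (φ0 (ldef 55)) := by decide
lemma k56 : Pred (φ0 (ldef 56)) := by decide
lemma k57 : Pred (φ0 (ldef 57)) := by decide
lemma k58 : Pred (φ0 (ldef 58)) := by decide
lemma k59 : Pred (φ0 (ldef 59)) := by decide

lemma kall : ∀ σ : Equiv.Perm (Fin 5), Equiv.Perm.sign σ = 1 → Pred (φ0 σ) := by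
  intro σ hσ
  obtain ⟨n, hn⟩ := complete σ hσ
  rw [hn]
  fin_cases n
  exacts [k0, k1, k2, k3, k4, k5, k6, k7, k8, k9, k10, k11, k12, k13, k14, k15, k16, k17, k18, k19, k20, k21, k22, k23, k24, k25, k26, k27, k28, k29, k30, k31, k32, k33, k34, k35, k36, k37, k38, k39, k40, k41, k42, k43, k44, k45, k46, k47, k48, k49, k50, k51, k52, k53, k54, k55, k56, k57, k58, k59]

lemma hdisj : ∀ i j : Fin 6, i ≠ j → ∀ e ∈ F i, e ∉ F j := by decide

lemma hunion : ∀ e : Sym2 V, (∃ i, e ∈ F i) ↔ e ∈ dodecahedronGraph.edgeSet := by decide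

lemma hcard : ∀ i : Fin 6, (F i).card = 5 := by decide

lemma hmatch : ∀ i : Fin 6, ∀ e ∈ F i, ∀ f ∈ F i, e ≠ f → ∀ v, ¬(v ∈ e ∧ v ∈ f) := by decide

lemma hsignc : ∀ i : Fin 6, Equiv.Perm.sign (cdef i) = 1 := by decide

lemma himgc : ∀ i : Fin 6, (F i).image (Sym2.map (φ0 (cdef i))) = F i := by decide

lemma hpow5 : ∀ i : Fin 6, ∀ v : V, ((φ0 (cdef i)) ^ 5) v = v := by decide

lemma hne1 : ∀ i : Fin 6, φ0 (cdef i) (Sum.inl 0) ≠ Sum.inl 0 := by decide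

lemma hsigns : ∀ i j : Fin 6, Equiv.Perm.sign (sdef i j) = 1 := by decide

lemma himgs : ∀ i j : Fin 6, (F i).image (Sym2.map (φ0 (sdef i j))) = F j := by decide

lemma card60 : Nat.card (alternatingGroup (Fin 5)) = 60 := by
  have h2 := two_mul_card_alternatingGroup (α := Fin 5)
  rw [← Nat.card_eq_fintype_card, ← Nat.card_eq_fintype_card] at h2
  have h3 : Nat.card (Equiv.Perm (Fin 5)) = 120 := by
    rw [Nat.card_eq_fintype_card, Fintype.card_perm, Fintype.card_fin]
    rfl
  omega

end Stmt18Aux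

open Stmt18Aux in
/-- The dodecahedron graph has a proper edge coloring with 6 colors (a partition of
its 30 edges into 6 color classes, each a 5-edge matching), where each color class
is invariant under a 5-fold rotation (an adjacency-preserving permutation of order
5), and the rotation group `A₅` (a group of order 60 of adjacency-preserving
permutations, isomorphic to `A₅`) permutes the 6 color classes transitively. -/
theorem stmt18 :
    ∃ M : Fin 6 → Set (Sym2 (Fin 10 ⊕ Fin 10)),
      (Pairwise fun i j => Disjoint (M i) (M j)) ∧
      (⋃ i, M i) = dodecahedronGraph.edgeSet ∧
      (∀ i, (M i).ncard = 5 ∧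
        (∀ e ∈ M i, ∀ f ∈ M i, e ≠ f → ∀ v, ¬(v ∈ e ∧ v ∈ f)) ∧
        ∃ g : Equiv.Perm (Fin 10 ⊕ Fin 10),
          (∀ a b, dodecahedronGraph.Adj (g a) (g b) ↔ dodecahedronGraph.Adj a b) ∧
          orderOf g = 5 ∧ Sym2.map g '' M i = M i) ∧
      ∃ H : Subgroup (Equiv.Perm (Fin 10 ⊕ Fin 10)),
        Nat.card H = 60 ∧
        Nonempty (H ≃* alternatingGroup (Fin 5)) ∧
        (∀ g ∈ H, ∀ a b,
          dodecahedronGraph.Adj (g a) (g b) ↔ dodecahedronGraph.Adj a b) ∧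
        (∀ g ∈ H, ∀ i, ∃ j, Sym2.map g '' M i = M j) ∧
        (∀ i j, ∃ g ∈ H, Sym2.map g '' M i = M j) := by
  haveI : Fact (Nat.Prime 5) := ⟨by norm_num⟩
  refine ⟨fun i => ↑(F i), ?_, ?_, ?_, Hgrp, ?_, ?_, ?_, ?_, ?_⟩
  · exact fun i j h => Finset.disjoint_coe.mpr (Finset.disjoint_left.mpr (hdisj i j h))
  · ext e
    rw [Set.mem_iUnion]
    simpa using hunion e
  · intro i
    refine ⟨by rw [Set.ncard_coe_finset, hcard], ?_, φ0 (cdef i), ?_, ?_, ?_⟩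
    · exact fun e he f hf => hmatch i e he f hf
    · exact (kall (cdef i) (hsignc i)).1
    · exact orderOf_eq_prime (Equiv.ext (hpow5 i))
        (fun h => hne1 i (by rw [h]; rfl))
    · rw [← Finset.coe_image, himgc i]
  · exact Nat.card_congr (MonoidHom.ofInjective φA_inj).toEquiv.symm ▸ card60
  · exact ⟨(MonoidHom.ofInjective φA_inj).symm⟩
  · rintro g ⟨σ, rfl⟩
    exact (kall σ.val (Equiv.Perm.mem_alternatingGroup.mp σ.2)).1
  · rintro g ⟨σ, rfl⟩ i
    obtain ⟨j, hj⟩ := (kall σ.val (Equiv.Perm.mem_alternatingGroup.mp σ.2)).2 i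
    exact ⟨j, by rw [← Finset.coe_image]; exact congrArg _ hj⟩
  · intro i j
    refine ⟨φA ⟨sdef i j, Equiv.Perm.mem_alternatingGroup.mpr (hsigns i j)⟩,
      ⟨_, rfl⟩, ?_⟩
    rw [← Finset.coe_image]
    exact congrArg _ (himgs i j)
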